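/- For Re(q) sufficiently large, |z| < 1, and x in the disk |x-1/2| < 1/2, the operator Q_{q,z} defined by Q_{q,z} B_q[φ](x) = z ∫₀^∞ e^(-t(x+1)) t^(2q-1) (1 - z e^(-t))^(-1) φ(t) dt admits the series expansion Q_{q,z} g(x) = Σ_{n≥1} z^n (x+n)^(-2q) g(1/(x+n)), where g = B_q[φ]. -/

import Mathlib

open MeasureTheory

noncomputable def Bq' (q : ℂ) (φ : ℝ → ℂ) (x : ℂ) : ℂ :=
  x ^ (-2 * q) * ∫ t in Set.Ioi (0:ℝ),
    Complex.exp (-(t:ℂ) / x) * φ t * (t:ℂ) ^ (2 * q - 1)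

theorem Qqz_series_expansion :
    ∃ q₀ : ℝ, ∀ q : ℂ, q₀ ≤ q.re → ∀ z : ℂ, ‖z‖ < 1 →
      ∀ φ : ℝ → ℂ,
        IntegrableOn (fun t : ℝ => φ t * (t:ℂ) ^ (2 * q - 1) * (Real.exp (-t) : ℂ))
          (Set.Ioi 0) →
      ∀ x : ℂ, ‖x - 1/2‖ < 1/2 →
        z * ∫ t in Set.Ioi (0:ℝ),
            Complex.exp (-(t:ℂ) * (x + 1)) * (t:ℂ) ^ (2 * q - 1) *
              (1 - z * Complex.exp (-(t:ℂ)))⁻¹ * φ t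
          = ∑' n : ℕ, z ^ (n + 1) * (x + (n + 1 : ℕ)) ^ (-2 * q) *
              Bq' q φ (1 / (x + (n + 1 : ℕ))) := by
  refine ⟨1, fun q hq z hz φ hφ x hx => ?_⟩
  set g : ℝ → ℂ := fun t => φ t * (t:ℂ) ^ (2 * q - 1) * (Real.exp (-t) : ℂ) with hg_def
  have hxre : 0 < x.re := by
    have h1 : |(x - 1/2).re| ≤ ‖x - 1/2‖ := Complex.abs_re_le_norm _
    have h2 : (x - 1/2).re = x.re - 1/2 := by simp [Complex.sub_re]
    rw [h2] at h1
    have h3 := abs_lt.mp (lt_of_le_of_lt h1 hx)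
    linarith [h3.1]
  set F : ℕ → ℝ → ℂ := fun n t =>
    z ^ n * (Complex.exp (-(t:ℂ) * (x + n)) * g t) with hF_def
  have hexp_bd : ∀ (n : ℕ) (t : ℝ), 0 ≤ t → ‖Complex.exp (-(t:ℂ) * (x + n))‖ ≤ 1 := by
    intro n t ht
    rw [Complex.norm_exp]
    have hre : (-(t:ℂ) * (x + n)).re = -t * (x.re + n) := by
      simp [Complex.mul_re, Complex.add_re, Complex.natCast_re, Complex.add_im,
        Complex.natCast_im]
    rw [hre]
    have : -t * (x.re + n) ≤ 0 := by
      apply mul_nonpos_of_nonpos_of_nonneg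
      · linarith
      · positivity
    exact Real.exp_le_one_iff.mpr this
  have hFmeas : ∀ n : ℕ, AEStronglyMeasurable (F n)
      (volume.restrict (Set.Ioi (0:ℝ))) := by
    intro n
    have hc : Continuous fun t : ℝ => z ^ n * Complex.exp (-(t:ℂ) * (x + n)) := by
      fun_prop
    exact ((hc.aestronglyMeasurable (μ := volume.restrict (Set.Ioi (0:ℝ)))).mul
      hφ.aestronglyMeasurable).congr
      (Filter.Eventually.of_forall fun t => by simp [hF_def, mul_assoc])
  have hFint : ∀ n : ℕ, IntegrableOn (F n) (Set.Ioi 0) := by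
    intro n
    refine Integrable.mono' ((hφ.norm).const_mul (‖z‖ ^ n)) (hFmeas n) ?_
    filter_upwards [ae_restrict_mem measurableSet_Ioi] with t ht
    have ht' : (0:ℝ) ≤ t := le_of_lt ht
    calc ‖F n t‖ = ‖z‖ ^ n * (‖Complex.exp (-(t:ℂ) * (x + n))‖ * ‖g t‖) := by
          simp [hF_def, norm_mul, norm_pow]
      _ ≤ ‖z‖ ^ n * (1 * ‖g t‖) := by
          gcongr
          exact hexp_bd n t ht'
      _ = ‖z‖ ^ n * ‖g t‖ := by ring
  have hnorm : ∀ n : ℕ, (∫ t in Set.Ioi (0:ℝ), ‖F n t‖)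
      ≤ ‖z‖ ^ n * ∫ t in Set.Ioi (0:ℝ), ‖g t‖ := by
    intro n
    rw [← MeasureTheory.integral_const_mul]
    refine integral_mono_ae (hFint n).norm ((hφ.norm).const_mul _) ?_
    filter_upwards [ae_restrict_mem measurableSet_Ioi] with t ht
    have ht' : (0:ℝ) ≤ t := le_of_lt ht
    calc ‖F n t‖ = ‖z‖ ^ n * (‖Complex.exp (-(t:ℂ) * (x + n))‖ * ‖g t‖) := by
          simp [hF_def, norm_mul, norm_pow]
      _ ≤ ‖z‖ ^ n * (1 * ‖g t‖) := by
          gcongr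
          exact hexp_bd n t ht'
      _ = ‖z‖ ^ n * ‖g t‖ := by ring
  have hsum : Summable fun n : ℕ => ∫ t in Set.Ioi (0:ℝ), ‖F n t‖ := by
    refine Summable.of_nonneg_of_le
      (fun n => integral_nonneg fun t => norm_nonneg _) hnorm ?_
    exact (summable_geometric_of_lt_one (norm_nonneg z) hz).mul_right _
  have hHS := MeasureTheory.hasSum_integral_of_summable_integral_norm hFint hsum
  -- pointwise identity on (0, ∞)
  have hpt : ∀ t : ℝ, t ∈ Set.Ioi (0:ℝ) →
      (∑' n : ℕ, F n t) =
        Complex.exp (-(t:ℂ) * (x + 1)) * (t:ℂ) ^ (2 * q - 1) *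
          (1 - z * Complex.exp (-(t:ℂ)))⁻¹ * φ t := by
    intro t ht
    have hc : ‖z * Complex.exp (-(t:ℂ))‖ < 1 := by
      rw [norm_mul, Complex.norm_exp]
      have h1 : Real.exp (-(t:ℂ)).re ≤ 1 := by
        simp only [Complex.neg_re, Complex.ofReal_re]
        exact Real.exp_le_one_iff.mpr (by linarith [Set.mem_Ioi.mp ht])
      calc ‖z‖ * Real.exp (-(t:ℂ)).re ≤ ‖z‖ * 1 := by
            gcongr
        _ < 1 := by simpa using hz
    have h1 : ∀ n : ℕ, F n t =
        (z * Complex.exp (-(t:ℂ))) ^ n * (Complex.exp (-(t:ℂ) * x) * g t) := by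
      intro n
      have hexp : Complex.exp (-(t:ℂ) * (x + n)) =
          Complex.exp (-(t:ℂ) * x) * Complex.exp (-(t:ℂ)) ^ n := by
        rw [← Complex.exp_nat_mul, ← Complex.exp_add]
        congr 1
        ring
      simp only [hF_def, hexp, mul_pow]
      ring
    rw [tsum_congr h1, tsum_mul_right, tsum_geometric_of_norm_lt_one hc]
    have hexp2 : Complex.exp (-(t:ℂ) * (x + 1)) =
        Complex.exp (-(t:ℂ) * x) * Complex.exp (-(t:ℂ)) := by
      rw [← Complex.exp_add]; congr 1; ring
    have hre : ((Real.exp (-t) : ℝ) : ℂ) = Complex.exp (-(t:ℂ)) := by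
      rw [Complex.ofReal_exp, Complex.ofReal_neg]
    simp only [hg_def, hexp2, hre]
    ring
  have hInt : (∫ t in Set.Ioi (0:ℝ),
        Complex.exp (-(t:ℂ) * (x + 1)) * (t:ℂ) ^ (2 * q - 1) *
          (1 - z * Complex.exp (-(t:ℂ)))⁻¹ * φ t)
      = ∑' n : ℕ, ∫ t in Set.Ioi (0:ℝ), F n t := by
    rw [hHS.tsum_eq]
    refine integral_congr_ae ?_
    filter_upwards [ae_restrict_mem measurableSet_Ioi] with t ht
    exact (hpt t ht).symm
  rw [hInt, ← tsum_mul_left]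
  refine tsum_congr fun n => ?_
  -- per-term identity
  have hwre : 0 < (x + ((n + 1 : ℕ) : ℂ)).re := by
    have : (x + ((n + 1 : ℕ) : ℂ)).re = x.re + (n + 1) := by
      simp [Complex.add_re]
    rw [this]; positivity
  have hw : (x + ((n + 1 : ℕ) : ℂ)) ≠ 0 := by
    intro h; rw [h] at hwre; simp at hwre
  have harg : (x + ((n + 1 : ℕ) : ℂ)).arg ≠ Real.pi := by
    intro h
    rcases (Complex.arg_eq_pi_iff).mp h with ⟨h1, -⟩
    linarith
  have hcpow : (x + ((n + 1 : ℕ) : ℂ)) ^ (-2 * q) ≠ 0 := by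
    rw [Ne, Complex.cpow_eq_zero_iff]
    rintro ⟨h, -⟩
    exact hw h
  rw [Bq', one_div, Complex.inv_cpow _ _ harg]
  have hI : (∫ t in Set.Ioi (0:ℝ), Complex.exp (-(t:ℂ) * (x + n)) * g t)
      = ∫ t in Set.Ioi (0:ℝ),
          Complex.exp (-(t:ℂ) / (x + ((n + 1 : ℕ) : ℂ))⁻¹) * φ t * (t:ℂ) ^ (2 * q - 1) := by
    refine integral_congr_ae (Filter.Eventually.of_forall fun t => ?_)
    dsimp only
    rw [div_eq_mul_inv, inv_inv]
    have hre : ((Real.exp (-t) : ℝ) : ℂ) = Complex.exp (-(t:ℂ)) := by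
      rw [Complex.ofReal_exp, Complex.ofReal_neg]
    have hexp : Complex.exp (-(t:ℂ) * (x + ((n + 1 : ℕ) : ℂ))) =
        Complex.exp (-(t:ℂ) * (x + n)) * Complex.exp (-(t:ℂ)) := by
      rw [← Complex.exp_add]
      congr 1
      push_cast
      ring
    simp only [hg_def, hexp, hre]
    ring
  calc z * ∫ t in Set.Ioi (0:ℝ), F n t
      = z ^ (n + 1) * ∫ t in Set.Ioi (0:ℝ), Complex.exp (-(t:ℂ) * (x + n)) * g t := by
        rw [hF_def]
        simp only [MeasureTheory.integral_const_mul]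
        ring
    _ = z ^ (n + 1) * ((x + ((n + 1 : ℕ) : ℂ)) ^ (-2 * q) *
          (((x + ((n + 1 : ℕ) : ℂ)) ^ (-2 * q))⁻¹ *
            ∫ t in Set.Ioi (0:ℝ),
              Complex.exp (-(t:ℂ) / (x + ((n + 1 : ℕ) : ℂ))⁻¹) * φ t *
                (t:ℂ) ^ (2 * q - 1))) := by
        rw [hI, ← mul_assoc ((x + ((n + 1 : ℕ) : ℂ)) ^ (-2 * q)), mul_inv_cancel₀ hcpow, one_mul]
    _ = z ^ (n + 1) * (x + ((n + 1 : ℕ) : ℂ)) ^ (-2 * q) *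
          (((x + ((n + 1 : ℕ) : ℂ)) ^ (-2 * q))⁻¹ *
            ∫ t in Set.Ioi (0:ℝ),
              Complex.exp (-(t:ℂ) / (x + ((n + 1 : ℕ) : ℂ))⁻¹) * φ t *
                (t:ℂ) ^ (2 * q - 1)) := by
        ring
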